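/- For any a ∈ ℝ and b ∈ [0,1], Φ(a + b) − Φ(a − b) ≥ 1 − 2Φ(−b) − a² b exp(−b²/2)/√(2π), where Φ is the standard Gaussian cumulative distribution function. -/

import Mathlib

open MeasureTheory

/-- Standard Gaussian density. -/
noncomputable def stdG (g : ℝ) : ℝ :=
  (Real.sqrt (2 * Real.pi))⁻¹ * Real.exp (-g ^ 2 / 2)

/-- Standard Gaussian cumulative distribution function. -/
noncomputable def Phi (x : ℝ) : ℝ := ∫ u in Set.Iio x, stdG u

lemma stdG_cont : Continuous stdG := by unfold stdG; fun_prop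

lemma stdG_integrable : Integrable stdG := by
  have h := (integrable_exp_neg_mul_sq (by norm_num : (0:ℝ) < 1/2)).const_mul
    (Real.sqrt (2*Real.pi))⁻¹
  refine h.congr ?_
  filter_upwards with g
  unfold stdG
  ring_nf

lemma stdG_integral : ∫ g, stdG g = 1 := by
  unfold stdG
  rw [MeasureTheory.integral_const_mul]
  have : (fun g : ℝ => Real.exp (-g ^ 2 / 2)) = fun g : ℝ => Real.exp (-(1/2) * g ^ 2) := by
    funext g; ring_nf
  rw [this, integral_gaussian]
  rw [inv_mul_eq_one₀ (by positivity)]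
  rw [show Real.pi / (1/2) = 2 * Real.pi by ring]

lemma Phi_eq_Iic (x : ℝ) : Phi x = ∫ u in Set.Iic x, stdG u :=
  (MeasureTheory.integral_Iic_eq_integral_Iio).symm

lemma Phi_add_neg (x : ℝ) : Phi x + Phi (-x) = 1 := by
  have h1 : Phi (-x) = ∫ u in Set.Ioi x, stdG u := by
    rw [Phi_eq_Iic, ← integral_comp_neg_Ioi]
    congr 1; funext u; unfold stdG; ring_nf
  rw [Phi_eq_Iic, h1, intervalIntegral.integral_Iic_add_Ioi
    stdG_integrable.integrableOn stdG_integrable.integrableOn, stdG_integral]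

lemma hasDerivAt_Phi (x : ℝ) : HasDerivAt Phi (stdG x) x := by
  have heq : Phi = fun y => Phi 0 + ∫ t in (0:ℝ)..y, stdG t := by
    funext y
    rw [← intervalIntegral.integral_Iic_sub_Iic stdG_integrable.integrableOn
      stdG_integrable.integrableOn, ← Phi_eq_Iic, ← Phi_eq_Iic]
    ring
  rw [heq]
  exact (intervalIntegral.integral_hasDerivAt_right
    stdG_integrable.intervalIntegrable
    (stdG_cont.stronglyMeasurableAtFilter _ _) stdG_cont.continuousAt).const_add _

lemma sinh_le_mul_cosh {t : ℝ} (ht : 0 ≤ t) : Real.sinh t ≤ t * Real.cosh t := by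
  have hmono : MonotoneOn (fun t => t * Real.cosh t - Real.sinh t) (Set.Ici (0:ℝ)) := by
    apply monotoneOn_of_deriv_nonneg (convex_Ici 0)
    · fun_prop
    · intro x hx
      exact (((hasDerivAt_id x).mul (Real.hasDerivAt_cosh x)).sub
        (Real.hasDerivAt_sinh x)).differentiableAt.differentiableWithinAt
    · intro x hx
      rw [interior_Ici] at hx
      have hd : HasDerivAt (fun t => t * Real.cosh t - Real.sinh t) (x * Real.sinh x) x := by
        have := ((hasDerivAt_id' (x := x)).mul (Real.hasDerivAt_cosh x)).sub
          (Real.hasDerivAt_sinh x)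
        refine this.congr_deriv ?_
        ring
      rw [hd.deriv]
      exact mul_nonneg hx.le (Real.sinh_nonneg_iff.2 hx.le)
  have := hmono (Set.self_mem_Ici) (Set.mem_Ici.2 ht) ht
  simpa using this

lemma key_ineq {a b : ℝ} (ha : 0 ≤ a) (hb0 : 0 ≤ b) (hb1 : b ≤ 1) :
    Real.exp (-(a-b)^2/2) - Real.exp (-(a+b)^2/2) ≤ 2*a*b*Real.exp (-b^2/2) := by
  have h0 : Real.sinh (a*b) ≤ a*b*Real.exp (a^2/2) := by
    calc Real.sinh (a*b) ≤ (a*b) * Real.cosh (a*b) := sinh_le_mul_cosh (by positivity)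
    _ ≤ (a*b) * Real.cosh a := by
        apply mul_le_mul_of_nonneg_left _ (by positivity)
        apply Real.cosh_le_cosh.2
        rw [abs_of_nonneg (by positivity), abs_of_nonneg ha]
        nlinarith
    _ ≤ (a*b) * Real.exp (a^2/2) :=
        mul_le_mul_of_nonneg_left (Real.cosh_le_exp_half_sq a) (by positivity)
  rw [Real.sinh_eq] at h0
  have h1 : Real.exp (-(a-b)^2/2) = Real.exp (-(a^2+b^2)/2) * Real.exp (a*b) := by
    rw [← Real.exp_add]; ring_nf
  have h2 : Real.exp (-(a+b)^2/2) = Real.exp (-(a^2+b^2)/2) * Real.exp (-(a*b)) := by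
    rw [← Real.exp_add]; ring_nf
  have h3 : Real.exp (a^2/2) * Real.exp (-(a^2+b^2)/2) = Real.exp (-b^2/2) := by
    rw [← Real.exp_add]; ring_nf
  have hpos : 0 < Real.exp (-(a^2+b^2)/2) := Real.exp_pos _
  rw [h1, h2]
  nlinarith [mul_le_mul_of_nonneg_right h0 hpos.le]

lemma deriv_nonneg {a b : ℝ} (ha : 0 ≤ a) (hb0 : 0 ≤ b) (hb1 : b ≤ 1) :
    0 ≤ stdG (a+b) - stdG (a-b) + 2*a*(b * Real.exp (-b^2/2) / Real.sqrt (2*Real.pi)) := by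
  have h := key_ineq ha hb0 hb1
  have hc : 0 < Real.sqrt (2*Real.pi) := by positivity
  have heq : stdG (a+b) - stdG (a-b) + 2*a*(b * Real.exp (-b^2/2) / Real.sqrt (2*Real.pi))
      = (Real.sqrt (2*Real.pi))⁻¹ *
        (Real.exp (-(a+b)^2/2) - Real.exp (-(a-b)^2/2) + 2*a*b*Real.exp (-b^2/2)) := by
    unfold stdG; field_simp
  rw [heq]
  exact mul_nonneg (by positivity) (by linarith)

theorem gaussian_cdf_window_bound (a b : ℝ) (hb : b ∈ Set.Icc (0 : ℝ) 1) :
    Phi (a + b) - Phi (a - b) ≥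
      1 - 2 * Phi (-b) - a ^ 2 * b * Real.exp (-b ^ 2 / 2) / Real.sqrt (2 * Real.pi) := by
  obtain ⟨hb0, hb1⟩ := hb
  have H : ∀ x : ℝ, 0 ≤ x → Phi (x + b) - Phi (x - b)
      + x ^ 2 * (b * Real.exp (-b ^ 2 / 2) / Real.sqrt (2 * Real.pi)) ≥ 1 - 2 * Phi (-b) := by
    intro x hx
    set c : ℝ := b * Real.exp (-b ^ 2 / 2) / Real.sqrt (2 * Real.pi) with hcdef
    have hder : ∀ y : ℝ, HasDerivAt (fun z => Phi (z + b) - Phi (z - b) + z ^ 2 * c)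
        (stdG (y + b) - stdG (y - b) + 2 * y * c) y := by
      intro y
      have h1 : HasDerivAt (fun z => Phi (z + b)) (stdG (y + b)) y := by
        have := (hasDerivAt_Phi (y + b)).comp y ((hasDerivAt_id y).add_const b)
        simpa [Function.comp_def] using this
      have h2 : HasDerivAt (fun z => Phi (z - b)) (stdG (y - b)) y := by
        have := (hasDerivAt_Phi (y - b)).comp y ((hasDerivAt_id y).sub_const b)
        simpa [Function.comp_def] using this
      have h3 : HasDerivAt (fun z : ℝ => z ^ 2 * c) (2 * y * c) y := by
        have := (hasDerivAt_pow 2 y).mul_const c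
        refine this.congr_deriv ?_
        push_cast
        ring
      exact (h1.sub h2).add h3
    have hmono : MonotoneOn (fun z => Phi (z + b) - Phi (z - b) + z ^ 2 * c) (Set.Ici 0) := by
      apply monotoneOn_of_deriv_nonneg (convex_Ici 0)
      · exact fun y _ => (hder y).continuousAt.continuousWithinAt
      · exact fun y _ => (hder y).differentiableAt.differentiableWithinAt
      · intro y hy
        rw [interior_Ici] at hy
        rw [(hder y).deriv, hcdef]
        have := deriv_nonneg hy.le hb0 hb1
        convert this using 3
    have h0 := hmono Set.self_mem_Ici (Set.mem_Ici.2 hx) hx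
    simp only [zero_add, zero_sub, ne_eq, OfNat.ofNat_ne_zero, not_false_eq_true,
      zero_pow, zero_mul, add_zero] at h0
    have hpb := Phi_add_neg b
    rw [ge_iff_le]
    calc 1 - 2 * Phi (-b) = Phi b - Phi (-b) := by linarith
    _ ≤ _ := h0
  rcases le_total 0 a with ha | ha
  · have := H a ha
    have hcc : a ^ 2 * (b * Real.exp (-b ^ 2 / 2) / Real.sqrt (2 * Real.pi))
        = a ^ 2 * b * Real.exp (-b ^ 2 / 2) / Real.sqrt (2 * Real.pi) := by ring
    linarith
  · have hH := H (-a) (by linarith)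
    have e1 := Phi_add_neg (a - b)
    rw [show -(a - b) = -a + b by ring] at e1
    have e2 := Phi_add_neg (a + b)
    rw [show -(a + b) = -a - b by ring] at e2
    have hcc : (-a) ^ 2 * (b * Real.exp (-b ^ 2 / 2) / Real.sqrt (2 * Real.pi))
        = a ^ 2 * b * Real.exp (-b ^ 2 / 2) / Real.sqrt (2 * Real.pi) := by ring
    linarith
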